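/- Let (a_n)_{n∈ℕ} be a sequence of nonnegative real numbers with ∑_{n=0}^∞ a_n < +∞, and let (c_n)_{n∈ℕ} be a sequence in (0,1). Then the partial sums ∑_{n=0}^{N} ln c_n tend to −∞ as N → ∞ if and only if the partial sums ∑_{n=0}^{N} ln(c_n + a_n) tend to −∞ as N → ∞. -/

import Mathlib

open Filter Finset Real

theorem stmt_19
    (a : ℕ → ℝ) (ha : ∀ n, 0 ≤ a n) (hsum : Summable a)
    (c : ℕ → ℝ) (hc : ∀ n, c n ∈ Set.Ioo (0:ℝ) 1)
    :
    Filter.Tendsto (fun N => ∑ n ∈ Finset.range (N+1), Real.log (c n))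
        Filter.atTop Filter.atBot ↔
      Filter.Tendsto (fun N => ∑ n ∈ Finset.range (N+1), Real.log (c n + a n))
        Filter.atTop Filter.atBot := by
  have hcpos : ∀ n, 0 < c n := fun n => (hc n).1
  have hca : ∀ n, 0 < c n + a n := fun n => add_pos_of_pos_of_nonneg (hcpos n) (ha n)
  set f : ℕ → ℝ := fun n => Real.log (c n + a n) with hf
  have hfa : ∀ n, f n ≤ a n := by
    intro n
    have h1 : c n + a n ≤ 1 + a n := by linarith [(hc n).2]
    have h2 : Real.log (c n + a n) ≤ Real.log (1 + a n) :=
      Real.log_le_log (hca n) h1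
    have h3 : Real.log (1 + a n) ≤ (1 + a n) - 1 :=
      Real.log_le_sub_one_of_pos (by linarith [ha n])
    simpa [hf] using h2.trans (by linarith)
  have hlef : ∀ n, Real.log (c n) ≤ f n := by
    intro n
    exact Real.log_le_log (hcpos n) (by linarith [ha n])
  constructor
  · -- forward direction
    intro hL
    by_contra hR
    set q : ℕ → ℝ := fun n => min (f n) 0 with hq
    set g : ℕ → ℝ := fun n => f n - q n with hg
    have hq0 : ∀ n, q n ≤ 0 := fun n => min_le_right _ _
    have hqf : ∀ n, q n ≤ f n := fun n => min_le_left _ _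
    have hg0 : ∀ n, 0 ≤ g n := fun n => sub_nonneg.2 (hqf n)
    have hga : ∀ n, g n ≤ a n := by
      intro n
      rcases le_or_gt (f n) 0 with h | h
      · simp [hg, hq, min_eq_left h, ha n]
      · simp [hg, hq, min_eq_right h.le, hfa n]
    have hgsum : Summable g := Summable.of_nonneg_of_le hg0 hga hsum
    have hQ : ¬ Tendsto (fun N => ∑ n ∈ range (N+1), q n) atTop atBot := by
      intro hQt
      apply hR
      have hGt : Tendsto (fun N => ∑ n ∈ range (N+1), g n) atTop (nhds (∑' n, g n)) :=
        hgsum.hasSum.tendsto_sum_nat.comp (tendsto_add_atTop_nat 1)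
      have := hGt.add_atBot hQt
      have heq : (fun N => (∑ n ∈ range (N+1), g n) + ∑ n ∈ range (N+1), q n)
          = fun N => ∑ n ∈ range (N+1), f n := by
        funext N
        rw [← Finset.sum_add_distrib]
        exact Finset.sum_congr rfl fun n _ => by simp [hg]
      rwa [heq] at this
    have hqsum : Summable q := by
      rw [← summable_neg_iff]
      rw [summable_iff_not_tendsto_nat_atTop_of_nonneg (fun n => neg_nonneg.2 (hq0 n))]
      intro hT
      apply hQ
      have hT' : Tendsto (fun N => ∑ n ∈ range N, q n) atTop atBot := by
        have hT2 : Tendsto (fun N => -(∑ n ∈ range N, q n)) atTop atTop := by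
          simpa using hT
        exact tendsto_neg_atTop_iff.mp hT2
      exact hT'.comp (tendsto_add_atTop_nat 1)
    -- q n → 0, a n → 0
    have hq_to : Tendsto q atTop (nhds 0) := hqsum.tendsto_atTop_zero
    have ha_to : Tendsto a atTop (nhds 0) := hsum.tendsto_atTop_zero
    have hEvq : ∀ᶠ n in atTop, (-1/8 : ℝ) < q n :=
      hq_to.eventually_const_lt (by norm_num)
    have hEva : ∀ᶠ n in atTop, a n < 1/8 :=
      ha_to.eventually_lt_const (by norm_num)
    obtain ⟨N₀, hN₀⟩ := (hEvq.and hEva).exists_forall_of_atTop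
    -- key pointwise bound
    have key : ∀ n, N₀ ≤ n → q n - 4 * a n ≤ Real.log (c n) := by
      intro n hn
      obtain ⟨hqn, han⟩ := hN₀ n hn
      have e1 : Real.exp (q n) ≤ c n + a n := by
        calc Real.exp (q n) ≤ Real.exp (f n) := Real.exp_le_exp.2 (hqf n)
          _ = c n + a n := Real.exp_log (hca n)
      have e2 : (7:ℝ)/8 ≤ Real.exp (q n) := by
        have h1 := Real.add_one_le_exp (-1/8 : ℝ)
        have h2 : Real.exp (-1/8 : ℝ) ≤ Real.exp (q n) := Real.exp_le_exp.2 hqn.le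
        linarith
      have e3 : (1:ℝ) + 4 * a n ≤ Real.exp (4 * a n) := by
        have := Real.add_one_le_exp (4 * a n); linarith
      have e4 : Real.exp (q n - 4 * a n) ≤ c n := by
        rw [Real.exp_sub, div_le_iff₀ (Real.exp_pos _)]
        have hexp_pos : (0:ℝ) < Real.exp (4 * a n) := Real.exp_pos _
        have hc_ge : Real.exp (q n) - a n ≤ c n := by linarith
        have ha0 := ha n
        nlinarith [mul_nonneg ha0 (Real.exp_pos (q n)).le, Real.exp_pos (q n)]
      calc q n - 4 * a n = Real.log (Real.exp (q n - 4 * a n)) := (Real.log_exp _).symm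
        _ ≤ Real.log (c n) := Real.log_le_log (Real.exp_pos _) e4
    -- lower bound on partial sums for N ≥ N₀
    set C : ℝ := (∑ n ∈ range N₀, Real.log (c n)) + (∑' n, q n) - 4 * (∑' n, a n) with hC
    have hlow : ∀ N, N₀ ≤ N → C ≤ ∑ n ∈ range (N+1), Real.log (c n) := by
      intro N hN
      have hsplit : ∑ n ∈ range (N+1), Real.log (c n)
          = (∑ n ∈ range N₀, Real.log (c n)) + ∑ n ∈ Ico N₀ (N+1), Real.log (c n) := by
        rw [Finset.range_eq_Ico, Finset.range_eq_Ico]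
        exact (Finset.sum_Ico_consecutive _ (Nat.zero_le _) (by omega)).symm
      have h1 : ∑ n ∈ Ico N₀ (N+1), (q n - 4 * a n) ≤ ∑ n ∈ Ico N₀ (N+1), Real.log (c n) :=
        Finset.sum_le_sum fun n hn => key n (Finset.mem_Ico.mp hn).1
      have h2 : (∑' n, q n) ≤ ∑ n ∈ Ico N₀ (N+1), q n := by
        have h := Summable.sum_le_tsum (Ico N₀ (N+1)) (fun n _ => neg_nonneg.2 (hq0 n)) hqsum.neg
        simp only [Finset.sum_neg_distrib, tsum_neg] at h
        linarith
      have h3 : ∑ n ∈ Ico N₀ (N+1), a n ≤ ∑' n, a n :=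
        Summable.sum_le_tsum _ (fun n _ => ha n) hsum
      have h4 : ∑ n ∈ Ico N₀ (N+1), (q n - 4 * a n)
          = (∑ n ∈ Ico N₀ (N+1), q n) - 4 * ∑ n ∈ Ico N₀ (N+1), a n := by
        rw [Finset.sum_sub_distrib, Finset.mul_sum]
      rw [hsplit, hC]
      have := h1
      rw [h4] at this
      linarith
    have hEvL : ∀ᶠ N in atTop, (∑ n ∈ range (N+1), Real.log (c n)) ≤ C - 1 :=
      hL.eventually_le_atBot (C - 1)
    obtain ⟨N, hN1, hN2⟩ := ((eventually_ge_atTop N₀).and hEvL).exists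
    linarith [hlow N hN1]
  · -- backward direction
    intro hR
    exact tendsto_atBot_mono (fun N => Finset.sum_le_sum fun n _ => hlef n) hR
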